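/- Let A be a nonempty linear order and let (I u) for u : ℕ → A be a family of linear orders such that for all a, b ∈ A and every u, the order I (a::b::u) is order-isomorphic to I u (equivalently, I is constant up to order isomorphism on 2-tail-equivalence classes). Then the replacement X = Σₗ (u : A^ω), I u satisfies (A ×ₗ A) ×ₗ X ≅ X; that is, X is invariant under left multiplication by A². -/

import Mathlib

/-- The sequence with first entry `a` followed by the entries of `u`. -/
def consSeq {α : Type*} (a : α) (u : ℕ → α) : ℕ → α
  | 0 => a
  | n + 1 => u n

lemma consSeq_lt_consSeq {A : Type*} [LinearOrder A] {a a' : A} {u u' : ℕ → A} :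
    toLex (consSeq a u) < toLex (consSeq a' u') ↔ a < a' ∨ (a = a' ∧ toLex u < toLex u') := by
  show Pi.Lex _ _ _ _ ↔ _ ∨ _ ∧ Pi.Lex _ _ _ _
  constructor
  · rintro ⟨i, hj, hi⟩
    cases i with
    | zero => exact Or.inl hi
    | succ n =>
      refine Or.inr ⟨hj 0 (Nat.succ_pos n), ⟨n, fun j hj' => hj (j + 1) (Nat.succ_lt_succ hj'), hi⟩⟩
  · rintro (hlt | ⟨rfl, n, hj, hn⟩)
    · exact ⟨0, fun j hj => absurd hj (Nat.not_lt_zero j), hlt⟩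
    · refine ⟨n + 1, fun j hjn => ?_, hn⟩
      cases j with
      | zero => rfl
      | succ m => exact hj m (Nat.lt_of_succ_lt_succ hjn)

lemma consSeq_eta {α : Type*} (v : ℕ → α) :
    consSeq (v 0) (consSeq (v 1) (fun n => v (n + 2))) = v := by
  funext n
  match n with
  | 0 => rfl
  | 1 => rfl
  | n + 2 => rfl

/-- If the fibers `I u` are constant up to order isomorphism on
2-tail-equivalence classes (i.e. `I (a::b::u) ≅ I u` for all `a`, `b`, `u`),
then the replacement `X = Σₗ (u : A^ω), I u` satisfies `(A ×ₗ A) ×ₗ X ≅ X`. -/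
theorem replacement_invariant_left_mul_sq (A : Type*) [LinearOrder A] [Nonempty A]
    (I : (ℕ → A) → Type*) [∀ u, LinearOrder (I u)]
    (h : ∀ (a b : A) (u : ℕ → A), Nonempty (I (consSeq a (consSeq b u)) ≃o I u)) :
    Nonempty
      (Lex (Lex (A × A) × Lex (Σ u : Lex (ℕ → A), I (ofLex u))) ≃o
        Lex (Σ u : Lex (ℕ → A), I (ofLex u))) := by
  have e : ∀ (a b : A) (u : ℕ → A), I (consSeq a (consSeq b u)) ≃o I u :=
    fun a b u => (h a b u).some
  set X := Lex (Σ u : Lex (ℕ → A), I (ofLex u)) with hX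
  let f : Lex (Lex (A × A) × X) → X := fun p =>
    toLex ⟨toLex (consSeq (ofLex (ofLex p).1).1
        (consSeq (ofLex (ofLex p).1).2 (ofLex (ofLex (ofLex p).2).1))),
      (e (ofLex (ofLex p).1).1 (ofLex (ofLex p).1).2
        (ofLex (ofLex (ofLex p).2).1)).symm (ofLex (ofLex p).2).2⟩
  have hmono : StrictMono f := by
    rintro ⟨⟨a, b⟩, ⟨u, x⟩⟩ ⟨⟨a', b'⟩, ⟨u', x'⟩⟩ hlt
    obtain hab | ⟨heq, h2⟩ := Prod.Lex.lt_iff.mp hlt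
    · replace hab := Prod.Lex.lt_iff.mp hab
      apply Sigma.Lex.left
      apply consSeq_lt_consSeq.mpr
      obtain ha | ⟨ha, hb⟩ := hab
      · exact Or.inl ha
      · exact Or.inr ⟨ha, by apply consSeq_lt_consSeq.mpr; exact Or.inl hb⟩
    · obtain ⟨rfl⟩ : (a, b) = (a', b') := heq
      obtain huu | ⟨hu, hx⟩ := Sigma.Lex.lt_def.mp h2
      · apply Sigma.Lex.left
        apply consSeq_lt_consSeq.mpr
        exact Or.inr ⟨rfl, by apply consSeq_lt_consSeq.mpr; exact Or.inr ⟨rfl, huu⟩⟩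
      · cases hu
        apply Sigma.Lex.right
        exact (e a b (ofLex u)).symm.strictMono hx
  have hsurj : Function.Surjective f := by
    rintro ⟨v, y⟩
    have hv : v = toLex (consSeq (ofLex v 0) (consSeq (ofLex v 1) (fun n => ofLex v (n + 2)))) :=
      (congrArg toLex (consSeq_eta (ofLex v))).symm
    revert y
    rw [hv]
    intro y
    refine ⟨toLex (toLex (ofLex v 0, ofLex v 1), toLex ⟨toLex (fun n => ofLex v (n + 2)),
      e (ofLex v 0) (ofLex v 1) (fun n => ofLex v (n + 2)) y⟩), ?_⟩
    exact congrArg (fun z => toLex (⟨toLex (consSeq (ofLex v 0) (consSeq (ofLex v 1)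
      (fun n => ofLex v (n + 2)))), z⟩ : Σ u : Lex (ℕ → A), I (ofLex u)))
      ((e (ofLex v 0) (ofLex v 1) (fun n => ofLex v (n + 2))).symm_apply_apply y)
  exact ⟨hmono.orderIsoOfSurjective f hsurj⟩
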